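/- Let G be a finite group, n ≥ 1, and ρ : G →* Matrix (Fin n) (Fin n) ℂ an irreducible unitary representation. Let ρ̂ : MonoidAlgebra ℂ G → Matrix (Fin n) (Fin n) ℂ be the linear extension of ρ (sending MonoidAlgebra.single g 1 to ρ(g)), and let ρ† : Matrix (Fin n) (Fin n) ℂ → MonoidAlgebra ℂ G be defined by ρ†(M) = ∑_{g ∈ G} (trace (ρ(g)ᴴ * M)) • (MonoidAlgebra.single g 1). Then the linear map E : MonoidAlgebra ℂ G → MonoidAlgebra ℂ G given by E(x) = (n / |G|) • ρ†(ρ̂(x)) is idempotent: E ∘ E = E. (Hence √(n/|G|) · ρ̂ is a partial isometry defining one outcome of a projective measurement on the group algebra.) -/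

import Mathlib

open Matrix BigOperators

/-- A matrix representation is unitary if every `ρ g` is a unitary matrix. -/
def IsUnitaryRep {G : Type*} [Group G] {n : ℕ}
    (ρ : G →* Matrix (Fin n) (Fin n) ℂ) : Prop :=
  ∀ g : G, (ρ g)ᴴ * ρ g = 1

/-- A matrix representation is irreducible if the only subspaces of `ℂⁿ`
invariant under every `ρ g` are the zero subspace and the whole space. -/
def IsIrreducibleRep {G : Type*} [Group G] {n : ℕ}
    (ρ : G →* Matrix (Fin n) (Fin n) ℂ) : Prop :=
  ∀ W : Submodule ℂ (Fin n → ℂ),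
    (∀ g : G, ∀ v ∈ W, (ρ g).mulVec v ∈ W) → W = ⊥ ∨ W = ⊤

/-- The adjoint `ρ†` of the linear extension of `ρ` to the group algebra:
`ρ†(M) = ∑ g, trace(ρ(g)ᴴ * M) • single g 1`. -/
noncomputable def rhoDag {G : Type*} [Group G] [Fintype G] {n : ℕ}
    (ρ : G →* Matrix (Fin n) (Fin n) ℂ)
    (M : Matrix (Fin n) (Fin n) ℂ) : MonoidAlgebra ℂ G :=
  ∑ g : G, (Matrix.trace ((ρ g)ᴴ * M)) • MonoidAlgebra.single g (1 : ℂ)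

/-- The linear extension `ρ̂` of `ρ` to the group algebra,
sending `MonoidAlgebra.single g 1` to `ρ g`. -/
noncomputable def rhoHat {G : Type*} [Group G] [Fintype G] {n : ℕ}
    (ρ : G →* Matrix (Fin n) (Fin n) ℂ)
    (x : MonoidAlgebra ℂ G) : Matrix (Fin n) (Fin n) ℂ :=
  ∑ g : G, x.coeff g • ρ g

section Aux

variable {G : Type*} [Group G] [Fintype G] {n : ℕ}

lemma rho_conjTranspose (ρ : G →* Matrix (Fin n) (Fin n) ℂ) (hu : IsUnitaryRep ρ) (g : G) :
    (ρ g)ᴴ = ρ g⁻¹ := by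
  have h1 : ρ g * ρ g⁻¹ = 1 := by rw [← _root_.map_mul, mul_inv_cancel, _root_.map_one]
  calc (ρ g)ᴴ = (ρ g)ᴴ * (ρ g * ρ g⁻¹) := by rw [h1, mul_one]
    _ = ((ρ g)ᴴ * ρ g) * ρ g⁻¹ := by rw [mul_assoc]
    _ = ρ g⁻¹ := by rw [hu g, one_mul]

lemma schur (hn : 1 ≤ n) (ρ : G →* Matrix (Fin n) (Fin n) ℂ) (hi : IsIrreducibleRep ρ)
    (T : Matrix (Fin n) (Fin n) ℂ) (hT : ∀ g : G, ρ g * T = T * ρ g) :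
    ∃ c : ℂ, T = c • 1 := by
  haveI : Nonempty (Fin n) := ⟨⟨0, hn⟩⟩
  obtain ⟨μ, hμ⟩ := Module.End.exists_eigenvalue (Matrix.mulVecLin T)
  refine ⟨μ, ?_⟩
  have hW : Module.End.eigenspace (Matrix.mulVecLin T) μ = ⊤ := by
    have hinvar : ∀ g : G, ∀ v ∈ Module.End.eigenspace (Matrix.mulVecLin T) μ,
        (ρ g).mulVec v ∈ Module.End.eigenspace (Matrix.mulVecLin T) μ := by
      intro g v hv
      rw [Module.End.mem_eigenspace_iff] at hv ⊢
      simp only [Matrix.mulVecLin_apply] at hv ⊢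
      rw [Matrix.mulVec_mulVec, ← hT, ← Matrix.mulVec_mulVec, hv, Matrix.mulVec_smul]
    rcases hi _ hinvar with h | h
    · exact absurd h hμ
    · exact h
  have hv : ∀ v : Fin n → ℂ, T.mulVec v = μ • v := by
    intro v
    have : v ∈ Module.End.eigenspace (Matrix.mulVecLin T) μ := hW ▸ Submodule.mem_top
    rw [Module.End.mem_eigenspace_iff] at this
    simpa using this
  ext i j
  have := congrFun (hv (Pi.single j 1)) i
  rw [Matrix.mulVec_single] at this
  simp only [Pi.smul_apply, Matrix.col_apply, MulOpposite.op_one, one_smul] at this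
  rw [this]
  simp [Matrix.one_apply, Pi.single_apply, eq_comm]

lemma conj_sum (hn : 1 ≤ n) (ρ : G →* Matrix (Fin n) (Fin n) ℂ) (hi : IsIrreducibleRep ρ)
    (A : Matrix (Fin n) (Fin n) ℂ) :
    ∑ g : G, ρ g * A * ρ g⁻¹ = ((Fintype.card G : ℂ) / n * A.trace) • 1 := by
  set S := ∑ g : G, ρ g * A * ρ g⁻¹ with hS
  have hcomm : ∀ h : G, ρ h * S = S * ρ h := by
    intro h
    rw [hS, Finset.mul_sum, Finset.sum_mul]
    refine Fintype.sum_equiv (Equiv.mulLeft h) _ _ (fun g => ?_)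
    have h1 : ρ h⁻¹ * ρ h = 1 := by rw [← _root_.map_mul, inv_mul_cancel, _root_.map_one]
    simp [_root_.map_mul, _root_.mul_inv_rev, mul_assoc, h1]
  obtain ⟨c, hc⟩ := schur hn ρ hi S hcomm
  have htr : S.trace = (Fintype.card G : ℂ) * A.trace := by
    rw [hS, Matrix.trace_sum]
    have : ∀ g : G, (ρ g * A * ρ g⁻¹).trace = A.trace := by
      intro g
      rw [Matrix.trace_mul_comm, ← mul_assoc, ← _root_.map_mul, inv_mul_cancel, _root_.map_one, one_mul]
    simp [this]
  have htr' : S.trace = c * n := by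
    rw [hc, Matrix.trace_smul, Matrix.trace_one]
    simp [smul_eq_mul]
  have hn0 : (n : ℂ) ≠ 0 := Nat.cast_ne_zero.mpr (by omega)
  have hcval : c = (Fintype.card G : ℂ) / n * A.trace := by
    field_simp
    rw [← htr', htr]
  rw [hc, hcval]

lemma key (hn : 1 ≤ n) (ρ : G →* Matrix (Fin n) (Fin n) ℂ)
    (hu : IsUnitaryRep ρ) (hi : IsIrreducibleRep ρ) (M : Matrix (Fin n) (Fin n) ℂ) :
    ∑ g : G, (Matrix.trace ((ρ g)ᴴ * M)) • ρ g = ((Fintype.card G : ℂ) / n) • M := by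
  have hC : ∀ a b i j : Fin n, ∑ g : G, ρ g a b * ρ g⁻¹ i j
      = ((Fintype.card G : ℂ) / n) * ((if b = i then 1 else 0) * (if a = j then 1 else 0)) := by
    intro a b i j
    have hterm : ∀ g : G,
        (ρ g * Matrix.single b i 1 * ρ g⁻¹ : Matrix (Fin n) (Fin n) ℂ) a j
        = ρ g a b * ρ g⁻¹ i j := by
      intro g
      simp [Matrix.mul_apply, Matrix.single, ite_and, Finset.sum_mul,
        Finset.mul_sum]
    have h2 := congrFun (congrFun (conj_sum hn ρ hi (Matrix.single b i 1)) a) j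
    rw [Matrix.sum_apply] at h2
    rw [Finset.sum_congr rfl (fun g _ => (hterm g).symm), h2]
    rcases eq_or_ne b i with rfl | hbi
    · rcases eq_or_ne a j with rfl | haj
      · simp [Matrix.trace_single_eq_same, Matrix.one_apply]
      · simp [Matrix.trace_single_eq_same, Matrix.one_apply, haj]
    · simp [Matrix.trace_single_eq_of_ne (h := hbi), hbi]
  ext a b
  rw [Matrix.sum_apply, Matrix.smul_apply]
  have : ∀ g : G, (Matrix.trace ((ρ g)ᴴ * M) • ρ g) a b
      = ∑ i : Fin n, ∑ j : Fin n, (ρ g a b * ρ g⁻¹ i j) * M j i := by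
    intro g
    rw [rho_conjTranspose ρ hu g, Matrix.smul_apply, Matrix.trace]
    simp only [Matrix.diag_apply, Matrix.mul_apply, smul_eq_mul, Finset.sum_mul,
      Finset.mul_sum]
    refine Finset.sum_congr rfl fun i _ => Finset.sum_congr rfl fun j _ => by ring
  rw [Finset.sum_congr rfl (fun g _ => this g), Finset.sum_comm]
  have : ∀ i : Fin n, ∑ g : G, ∑ j : Fin n, (ρ g a b * ρ g⁻¹ i j) * M j i
      = ∑ j : Fin n, (∑ g : G, ρ g a b * ρ g⁻¹ i j) * M j i := by
    intro i
    rw [Finset.sum_comm]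
    exact Finset.sum_congr rfl fun j _ => by rw [Finset.sum_mul]
  rw [Finset.sum_congr rfl (fun i _ => this i)]
  simp only [hC]
  rw [Finset.sum_comm]
  simp [Finset.sum_ite_eq, Finset.sum_ite_eq', mul_comm, mul_assoc, smul_eq_mul]

lemma rhoDag_apply (ρ : G →* Matrix (Fin n) (Fin n) ℂ) (M : Matrix (Fin n) (Fin n) ℂ)
    (h : G) : (rhoDag ρ M).coeff h = Matrix.trace ((ρ h)ᴴ * M) := by
  rw [rhoDag, MonoidAlgebra.coeff_sum, Finset.sum_apply']
  rw [Finset.sum_eq_single h]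
  · simp [MonoidAlgebra.coeff_single]
  · intro g _ hg
    simp [MonoidAlgebra.coeff_single, Finsupp.single_apply, hg]
  · simp

lemma rhoHat_rhoDag (hn : 1 ≤ n) (ρ : G →* Matrix (Fin n) (Fin n) ℂ)
    (hu : IsUnitaryRep ρ) (hi : IsIrreducibleRep ρ) (M : Matrix (Fin n) (Fin n) ℂ) :
    rhoHat ρ (rhoDag ρ M) = ((Fintype.card G : ℂ) / n) • M := by
  rw [rhoHat]
  simp only [rhoDag_apply]
  exact key hn ρ hu hi M

end Aux

theorem stmt9 {G : Type*} [Group G] [Fintype G] {n : ℕ} (hn : 1 ≤ n)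
    (ρ : G →* Matrix (Fin n) (Fin n) ℂ)
    (hu : IsUnitaryRep ρ) (hi : IsIrreducibleRep ρ)
    (x : MonoidAlgebra ℂ G) :
    ((n : ℂ) / (Fintype.card G : ℂ)) •
        rhoDag ρ (rhoHat ρ (((n : ℂ) / (Fintype.card G : ℂ)) • rhoDag ρ (rhoHat ρ x)))
      = ((n : ℂ) / (Fintype.card G : ℂ)) • rhoDag ρ (rhoHat ρ x) := by
  have hn0 : (n : ℂ) ≠ 0 := Nat.cast_ne_zero.mpr (by omega)
  have hG0 : (Fintype.card G : ℂ) ≠ 0 := Nat.cast_ne_zero.mpr Fintype.card_ne_zero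
  have hsmul : rhoHat ρ (((n : ℂ) / (Fintype.card G : ℂ)) • rhoDag ρ (rhoHat ρ x))
      = ((n : ℂ) / (Fintype.card G : ℂ)) • rhoHat ρ (rhoDag ρ (rhoHat ρ x)) := by
    simp only [rhoHat]
    rw [Finset.smul_sum]
    exact Finset.sum_congr rfl fun g _ => by
      rw [MonoidAlgebra.coeff_smul_apply, smul_assoc]
  rw [hsmul, rhoHat_rhoDag hn ρ hu hi, smul_smul, div_mul_div_comm,
    mul_comm ((n:ℂ)) ((Fintype.card G : ℂ)), div_self (by exact mul_ne_zero hG0 hn0),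
    one_smul]
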